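/- With notation as in the inductive construction of the scaled exponent vectors: suppose $\widetilde{\mathfrak{m}}_{i-1} = C_{i-1}\left(\frac{\mathfrak{m}_{i-1}}{a} - \tilde{x}_{i-1}\right)$, define $C_i := \frac{a \langle n_{0,i}, \widetilde{\mathfrak{m}}_{i-1}\rangle}{\langle n_{0,i}, \mathfrak{m}_{i-1}\rangle}$ and $\widetilde{\mathfrak{m}}_i := C_i \left(\frac{\mathfrak{m}_i}{a} - \tilde{x}_i\right)$, where $\tilde{x}_i = \tilde{x}_{i-1} - \frac{\langle n_{0,i}, \tilde{x}_{i-1}\rangle}{\langle n_{0,i}, \widetilde{\mathfrak{m}}_{i-1}\rangle}\widetilde{\mathfrak{m}}_{i-1}$, $\mathfrak{m}_{i-1} - \mathfrak{m}_i = k_i m_{0,i}$, and $\langle n_{0,i}, \widetilde{\mathfrak{m}}_{i-1}\rangle \neq 0 \neq \langle n_{0,i}, \mathfrak{m}_{i-1}\rangle$. Then $\widetilde{\mathfrak{m}}_{i-1} - \widetilde{\mathfrak{m}}_i = \frac{\langle n_{0,i}, \widetilde{\mathfrak{m}}_{i-1}\rangle}{\langle n_{0,i}, \mathfrak{m}_{i-1}\rangle}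 \, k_i \, m_{0,i} = \frac{\langle n_{0,i}, \widetilde{\mathfrak{m}}_{i-1}\rangle}{\langle n_{0,i}, \mathfrak{m}_{i-1}\rangle}(\mathfrak{m}_{i-1} - \mathfrak{m}_i)$. -/

import Mathlib

/-- the central algebraic computation in the key lemma.
In a real vector space with functional `n0`, positive integer `a`, points
`xprev = x̃_{i-1}`, `xcur = x̃_i`, and exponent vectors as in the inductive
construction:
`𝔪̃_{i-1} = C_{i-1}(𝔪_{i-1}/a - x̃_{i-1})`,
`x̃_i = x̃_{i-1} - (⟨n0, x̃_{i-1}⟩/⟨n0, 𝔪̃_{i-1}⟩) 𝔪̃_{i-1}`,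
`𝔪̃_i = (a⟨n0, 𝔪̃_{i-1}⟩/⟨n0, 𝔪_{i-1}⟩)(𝔪_i/a - x̃_i)`, and
`𝔪_{i-1} - 𝔪_i = k 𝔪_{0,i}`, with `⟨n0, 𝔪̃_{i-1}⟩ ≠ 0 ≠ ⟨n0, 𝔪_{i-1}⟩`,
one has
`𝔪̃_{i-1} - 𝔪̃_i = (⟨n0, 𝔪̃_{i-1}⟩/⟨n0, 𝔪_{i-1}⟩) k 𝔪_{0,i}
               = (⟨n0, 𝔪̃_{i-1}⟩/⟨n0, 𝔪_{i-1}⟩)(𝔪_{i-1} - 𝔪_i)`. -/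
theorem key_lemma_bend_computation
    {V : Type*} [AddCommGroup V] [Module ℝ V]
    (n0 : V →ₗ[ℝ] ℝ) (a : ℕ) (ha : 0 < a)
    (mprev mcur m0 : V) (k : ℤ)
    (xprev xcur mtprev mtcur : V) (Cprev : ℝ)
    (hmtprev : mtprev = Cprev • (((a : ℝ))⁻¹ • mprev - xprev))
    (hx : xcur = xprev - ((n0 xprev) / (n0 mtprev)) • mtprev)
    (hmtcur : mtcur = (((a : ℝ) * n0 mtprev) / (n0 mprev)) •
      (((a : ℝ))⁻¹ • mcur - xcur))
    (hbend : mprev - mcur = (k : ℝ) • m0)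
    (h1 : n0 mtprev ≠ 0) (h2 : n0 mprev ≠ 0) :
    mtprev - mtcur = ((n0 mtprev) / (n0 mprev)) • ((k : ℝ) • m0) ∧
    mtprev - mtcur = ((n0 mtprev) / (n0 mprev)) • (mprev - mcur) := by
  have ha' : (a : ℝ) ≠ 0 := Nat.cast_ne_zero.mpr ha.ne'
  have key : mtprev - mtcur = ((n0 mtprev) / (n0 mprev)) • (mprev - mcur) := by
    have hN : (a : ℝ) * n0 mtprev = Cprev * (n0 mprev - (a : ℝ) * n0 xprev) := by
      rw [hmtprev]
      simp only [map_sub, map_smul, smul_eq_mul]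
      field_simp
    set N := n0 mtprev with hNd
    rw [hmtcur, hx, hmtprev]
    match_scalars
    · field_simp
      linear_combination (-1 : ℝ) * hN
    · field_simp
      linear_combination hN
    · field_simp
  exact ⟨by rw [key, hbend], key⟩
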